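/- Let ν = x₀ < x₁ < ... < x_i = μ be a partition of [ν, μ], m ∈ (0,1], and let G be continuously differentiable on an interval containing [ν, μ] and the points (x_j + x_{j+1})/(2m), with |G'| being m-convex. Let W : [ν, μ] → ℝ be nonnegative, continuous, and symmetric about each midpoint (x_j + x_{j+1})/2 on each subinterval [x_j, x_{j+1}]. Define T(G,W) = Σ_{j=0}^{i-1} ((G(x_j) + G(x_{j+1}))/2) ∫_{x_j}^{x_{j+1}} W(t) dt. Then |∫_ν^μ W(t)G(t) dt − T(G,W)| ≤ Σ_{j=0}^{i-1} ((x_{j+1} - x_j)²/4) · ‖W‖_∞ · [ (1/3)(|G'(x_j)| + |G'(x_{j+1})|) + (m/3)·|G'((x_{j+1}+x_j)/(2m))| ]. -/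

import Mathlib

open Set MeasureTheory intervalIntegral

lemma sub_bound
    (a b m : ℝ) (hm0 : 0 < m)
    (p q : ℝ) (hpq : p < q)
    (hsub : Set.Icc p q ⊆ Set.Ioo a b)
    (hmidpq : (p + q) / (2 * m) ∈ Set.Ioo a b)
    (G W : ℝ → ℝ)
    (hG : ContDiffOn ℝ 1 G (Set.Ioo a b))
    (hG' : ∀ u ∈ Set.Ioo a b, ∀ v ∈ Set.Ioo a b, ∀ γ ∈ Set.Icc (0:ℝ) 1,
      |deriv G (γ * u + m * (1 - γ) * v)| ≤ γ * |deriv G u| + m * (1 - γ) * |deriv G v|)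
    (hWc : Continuous W)
    (hWs : ∀ t ∈ Set.Icc p q, W (p + q - t) = W t)
    (M : ℝ) (hM : ∀ t ∈ Set.Icc p q, W t ≤ M)
    (hWnn : ∀ t ∈ Set.Icc p q, 0 ≤ W t) :
    |(∫ t in p..q, W t * G t) - (G p + G q) / 2 * ∫ t in p..q, W t|
      ≤ (q - p) ^ 2 / 4 * M *
          ((1/3) * (|deriv G p| + |deriv G q|)
            + (m / 3) * |deriv G ((q + p) / (2 * m))|) := by
  set c : ℝ := (p + q) / 2 with hc
  have hpc : p < c := by rw [hc]; linarith
  have hcq : c < q := by rw [hc]; linarith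
  have hd0 : (0:ℝ) < c - p := by linarith
  have hd0' : (0:ℝ) < q - c := by linarith
  have hdd : q - c = c - p := by rw [hc]; ring
  have hM0 : 0 ≤ M := le_trans (hWnn p ⟨le_refl p, hpq.le⟩) (hM p ⟨le_refl p, hpq.le⟩)
  set A := |deriv G p| with hA
  set B := |deriv G q| with hB
  set C := |deriv G ((q + p) / (2 * m))| with hC
  have hA0 : 0 ≤ A := abs_nonneg _
  have hB0 : 0 ≤ B := abs_nonneg _
  have hC0 : 0 ≤ C := abs_nonneg _
  set P : ℝ → ℝ := fun t => ∫ s in p..t, W s with hPdef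
  have hP : ∀ t, HasDerivAt P (W t) t := fun t =>
    (hWc.integral_hasStrictDerivAt p t).hasDerivAt
  have hPdiff : Differentiable ℝ P := fun t => (hP t).differentiableAt
  have hPcont : Continuous P := hPdiff.continuous
  have hUIcc : Set.uIcc p q = Set.Icc p q := Set.uIcc_of_le hpq.le
  -- G has derivative on Icc p q
  have hGd : ∀ t ∈ Set.Icc p q, HasDerivAt G (deriv G t) t := by
    intro t ht
    have h1 : t ∈ Set.Ioo a b := hsub ht
    exact ((hG.contDiffAt (isOpen_Ioo.mem_nhds h1)).differentiableAt one_ne_zero).hasDerivAt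
  have hG'cont : ContinuousOn (deriv G) (Set.Icc p q) :=
    (hG.continuousOn_deriv_of_isOpen isOpen_Ioo le_rfl).mono hsub
  have hGcont : ContinuousOn G (Set.Icc p q) := hG.continuousOn.mono hsub
  -- integrabilities
  have intW : IntervalIntegrable W volume p q := hWc.intervalIntegrable p q
  have intG' : IntervalIntegrable (deriv G) volume p q := by
    rw [intervalIntegrable_iff_integrableOn_Icc_of_le hpq.le]
    exact hG'cont.integrableOn_compact isCompact_Icc
  have intG'P : IntervalIntegrable (fun s => deriv G s * P s) volume p q := by
    rw [intervalIntegrable_iff_integrableOn_Icc_of_le hpq.le]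
    exact (hG'cont.mul hPcont.continuousOn).integrableOn_compact isCompact_Icc
  -- integration by parts
  have parts : ∫ t in p..q, G t * W t
      = G q * P q - G p * P p - ∫ t in p..q, deriv G t * P t := by
    apply intervalIntegral.integral_mul_deriv_eq_deriv_mul
    · intro t ht; exact hGd t (hUIcc ▸ ht)
    · intro t _; exact hP t
    · exact intG'
    · exact intW
  have hPp : P p = 0 := intervalIntegral.integral_same
  have ftc : ∫ t in p..q, deriv G t = G q - G p := by
    apply intervalIntegral.integral_eq_sub_of_hasDerivAt
    · intro t ht; exact hGd t (hUIcc ▸ ht)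
    · exact intG'
  -- rewrite the error as ∫ G' * K
  have hE : (∫ t in p..q, W t * G t) - (G p + G q) / 2 * P q
      = ∫ s in p..q, deriv G s * (P q / 2 - P s) := by
    have h1 : ∫ t in p..q, W t * G t = ∫ t in p..q, G t * W t := by
      apply intervalIntegral.integral_congr; intro t _; simp [mul_comm]
    have h2 : ∫ s in p..q, deriv G s * (P q / 2 - P s)
        = (∫ s in p..q, deriv G s) * (P q / 2) - ∫ s in p..q, deriv G s * P s := by
      rw [← intervalIntegral.integral_mul_const]
      rw [← intervalIntegral.integral_sub (intG'.mul_const _) intG'P]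
      apply intervalIntegral.integral_congr; intro s _; ring
    rw [h1, parts, h2, ftc, hPp]; ring
  -- symmetry: P q = 2 * P c
  have hPq : P q = 2 * P c := by
    have intWcq : IntervalIntegrable W volume c q := hWc.intervalIntegrable c q
    have intWpc : IntervalIntegrable W volume p c := hWc.intervalIntegrable p c
    have h1 : ∫ s in c..q, W (p + q - s) = ∫ s in p..c, W s := by
      have := intervalIntegral.integral_comp_sub_left (a := c) (b := q) W (p + q)
      simpa [show p + q - q = p by ring, show p + q - c = c by rw [hc]; ring] using this
    have h2 : ∫ s in c..q, W (p + q - s) = ∫ s in c..q, W s := by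
      apply intervalIntegral.integral_congr
      intro s hs
      rw [Set.uIcc_of_le hcq.le] at hs
      exact hWs s ⟨hpc.le.trans hs.1, hs.2⟩
    have h3 : P c + ∫ s in c..q, W s = P q :=
      intervalIntegral.integral_add_adjacent_intervals intWpc intWcq
    rw [← h2, h1] at h3
    rw [hPdef]; simp only []
    linarith [h3]
  -- pointwise bound on K
  have hK : ∀ s ∈ Set.Icc p q, |P q / 2 - P s| ≤ M * |c - s| := by
    intro s hs
    have intWsc : IntervalIntegrable W volume s c := hWc.intervalIntegrable s c
    have intWps : IntervalIntegrable W volume p s := hWc.intervalIntegrable p s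
    have intWpc : IntervalIntegrable W volume p c := hWc.intervalIntegrable p c
    have hKs : P q / 2 - P s = ∫ t in s..c, W t := by
      rw [hPq]
      have : (2 : ℝ) * P c / 2 - P s = P c - P s := by ring
      rw [this]
      exact intervalIntegral.integral_interval_sub_left intWpc intWps
    rw [hKs]
    rcases le_total s c with hsc | hcs
    · have hnn : 0 ≤ ∫ t in s..c, W t := by
        apply intervalIntegral.integral_nonneg hsc
        intro t ht; exact hWnn t ⟨hs.1.trans ht.1, ht.2.trans hcq.le⟩
      have hub : ∫ t in s..c, W t ≤ M * (c - s) := by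
        calc ∫ t in s..c, W t ≤ ∫ _t in s..c, M := by
              apply intervalIntegral.integral_mono_on hsc intWsc intervalIntegrable_const
              intro t ht; exact hM t ⟨hs.1.trans ht.1, ht.2.trans hcq.le⟩
          _ = M * (c - s) := by simp [mul_comm]
      rw [abs_of_nonneg hnn, abs_of_nonneg (by linarith : (0:ℝ) ≤ c - s)]
      exact hub
    · have heq : ∫ t in s..c, W t = -∫ t in c..s, W t := intervalIntegral.integral_symm c s
      have hnn : 0 ≤ ∫ t in c..s, W t := by
        apply intervalIntegral.integral_nonneg hcs
        intro t ht; exact hWnn t ⟨hpc.le.trans ht.1, ht.2.trans hs.2⟩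
      have hub : ∫ t in c..s, W t ≤ M * (s - c) := by
        calc ∫ t in c..s, W t ≤ ∫ _t in c..s, M := by
              apply intervalIntegral.integral_mono_on hcs (hWc.intervalIntegrable c s)
                intervalIntegrable_const
              intro t ht; exact hM t ⟨hpc.le.trans ht.1, ht.2.trans hs.2⟩
          _ = M * (s - c) := by simp [mul_comm]
      have habs : M * |c - s| = M * (s - c) := by
        rw [abs_of_nonpos (by linarith)]; ring
      rw [heq, abs_neg, abs_of_nonneg hnn, habs]
      exact hub
  -- pointwise bound on deriv G, left half
  have hGL : ∀ s ∈ Set.Icc p c, |deriv G s| ≤ ((c - s) * A + (s - p) * (m * C)) / (c - p) := by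
    intro s hs
    set γ : ℝ := (c - s) / (c - p) with hγ
    have hγ0 : 0 ≤ γ := div_nonneg (by linarith [hs.2]) hd0.le
    have hγ1 : γ ≤ 1 := by rw [hγ, div_le_one hd0]; linarith [hs.1]
    have hp' : p ∈ Set.Ioo a b := hsub ⟨le_refl p, hpq.le⟩
    have hmc : m * ((p + q) / (2 * m)) = c := by
      rw [hc]; field_simp [hm0.ne']
    have harg : γ * p + m * (1 - γ) * ((p + q) / (2 * m)) = s := by
      have h1 : m * (1 - γ) * ((p + q) / (2 * m)) = (1 - γ) * c := by
        rw [← hmc]; ring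
      rw [h1, hγ]; field_simp [hd0.ne']; ring
    have hkey := hG' p hp' ((p + q) / (2 * m)) hmidpq γ ⟨hγ0, hγ1⟩
    rw [harg] at hkey
    have hCC : |deriv G ((p + q) / (2 * m))| = C := by rw [hC, add_comm p q]
    rw [hCC] at hkey
    calc |deriv G s| ≤ γ * A + m * (1 - γ) * C := hkey
      _ = ((c - s) * A + (s - p) * (m * C)) / (c - p) := by
          rw [hγ]; field_simp [hm0.ne', sub_ne_zero.mpr hpq.ne', hd0.ne', ne_of_gt (by linarith : (0:ℝ) < -p + q)]; ring
  have hGR : ∀ s ∈ Set.Icc c q, |deriv G s| ≤ ((s - c) * B + (q - s) * (m * C)) / (c - p) := by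
    intro s hs
    set γ : ℝ := (s - c) / (q - c) with hγ
    have hγ0 : 0 ≤ γ := div_nonneg (by linarith [hs.1]) hd0'.le
    have hγ1 : γ ≤ 1 := by rw [hγ, div_le_one hd0']; linarith [hs.2]
    have hq' : q ∈ Set.Ioo a b := hsub ⟨hpq.le, le_refl q⟩
    have hmc : m * ((p + q) / (2 * m)) = c := by
      rw [hc]; field_simp [hm0.ne']
    have harg : γ * q + m * (1 - γ) * ((p + q) / (2 * m)) = s := by
      have h1 : m * (1 - γ) * ((p + q) / (2 * m)) = (1 - γ) * c := by
        rw [← hmc]; ring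
      rw [h1, hγ]; field_simp [hd0'.ne']; ring
    have hkey := hG' q hq' ((p + q) / (2 * m)) hmidpq γ ⟨hγ0, hγ1⟩
    rw [harg] at hkey
    have hCC : |deriv G ((p + q) / (2 * m))| = C := by rw [hC, add_comm p q]
    rw [hCC] at hkey
    calc |deriv G s| ≤ γ * B + m * (1 - γ) * C := hkey
      _ = ((s - c) * B + (q - s) * (m * C)) / (c - p) := by
          rw [hγ, hdd]; field_simp [hm0.ne', sub_ne_zero.mpr hpq.ne', hd0.ne', ne_of_gt (by linarith : (0:ℝ) < -p + q)]; ring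
  -- pointwise product bounds
  have hPW1 : ∀ s ∈ Set.Icc p c, |deriv G s * (P q / 2 - P s)|
      ≤ (M * (c - s)) * (((c - s) * A + (s - p) * (m * C)) / (c - p)) := by
    intro s hs
    have hsfull : s ∈ Set.Icc p q := ⟨hs.1, hs.2.trans hcq.le⟩
    rw [abs_mul]
    have h1 := hGL s hs
    have h2 := hK s hsfull
    have h2' : |P q / 2 - P s| ≤ M * (c - s) := by
      rwa [abs_of_nonneg (show (0:ℝ) ≤ c - s by linarith [hs.2])] at h2
    have hnum : 0 ≤ ((c - s) * A + (s - p) * (m * C)) / (c - p) :=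
      div_nonneg (add_nonneg (mul_nonneg (by linarith [hs.2]) hA0)
        (mul_nonneg (by linarith [hs.1]) (mul_nonneg hm0.le hC0))) hd0.le
    calc |deriv G s| * |P q / 2 - P s|
        ≤ (((c - s) * A + (s - p) * (m * C)) / (c - p)) * (M * (c - s)) :=
          mul_le_mul h1 h2' (abs_nonneg _) hnum
      _ = (M * (c - s)) * (((c - s) * A + (s - p) * (m * C)) / (c - p)) := by ring
  have hPW2 : ∀ s ∈ Set.Icc c q, |deriv G s * (P q / 2 - P s)|
      ≤ (M * (s - c)) * (((s - c) * B + (q - s) * (m * C)) / (c - p)) := by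
    intro s hs
    have hsfull : s ∈ Set.Icc p q := ⟨hpc.le.trans hs.1, hs.2⟩
    rw [abs_mul]
    have h1 := hGR s hs
    have h2 := hK s hsfull
    have h2' : |P q / 2 - P s| ≤ M * (s - c) := by
      rw [abs_of_nonpos (by linarith [hs.1] : c - s ≤ 0)] at h2
      calc |P q / 2 - P s| ≤ M * -(c - s) := h2
        _ = M * (s - c) := by ring
    have hnum : 0 ≤ ((s - c) * B + (q - s) * (m * C)) / (c - p) :=
      div_nonneg (add_nonneg (mul_nonneg (by linarith [hs.1]) hB0)
        (mul_nonneg (by linarith [hs.2]) (mul_nonneg hm0.le hC0))) hd0.le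
    calc |deriv G s| * |P q / 2 - P s|
        ≤ (((s - c) * B + (q - s) * (m * C)) / (c - p)) * (M * (s - c)) :=
          mul_le_mul h1 h2' (abs_nonneg _) hnum
      _ = (M * (s - c)) * (((s - c) * B + (q - s) * (m * C)) / (c - p)) := by ring
  -- elementary integrals
  have e0 : (∫ s in p..c, (c - s)) = (c - p)^2 / 2 := by
    have h : (∫ s in p..c, (c - s)) = ∫ x in (c - c)..(c - p), x :=
      intervalIntegral.integral_comp_sub_left (fun x : ℝ => x) c
    rw [h, sub_self, integral_id]; ring
  have e1 : (∫ s in p..c, (c - s)^2) = (c - p)^3 / 3 := by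
    have h : (∫ s in p..c, (c - s)^2) = ∫ x in (c - c)..(c - p), x^2 :=
      intervalIntegral.integral_comp_sub_left (fun x : ℝ => x^2) c
    rw [h, sub_self, integral_pow]; norm_num
  have e2 : (∫ s in p..c, (c - s) * (s - p)) = (c - p)^3 / 6 := by
    have hcg : (∫ s in p..c, (c - s) * (s - p))
        = ∫ s in p..c, ((c - p) * (c - s) - (c - s)^2) := by
      apply intervalIntegral.integral_congr; intro s _; ring
    rw [hcg, intervalIntegral.integral_sub, intervalIntegral.integral_const_mul, e0, e1]
    · ring
    · apply Continuous.intervalIntegrable; fun_prop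
    · apply Continuous.intervalIntegrable; fun_prop
  have e3' : (∫ s in c..q, (s - c)) = (c - p)^2 / 2 := by
    have h : (∫ s in c..q, (s - c)) = ∫ x in (c - c)..(q - c), x :=
      intervalIntegral.integral_comp_sub_right (fun x : ℝ => x) c
    rw [h, sub_self, integral_id, hdd]; ring
  have e3 : (∫ s in c..q, (s - c)^2) = (c - p)^3 / 3 := by
    have h : (∫ s in c..q, (s - c)^2) = ∫ x in (c - c)..(q - c), x^2 :=
      intervalIntegral.integral_comp_sub_right (fun x : ℝ => x^2) c
    rw [h, sub_self, integral_pow, hdd]; norm_num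
  have e4 : (∫ s in c..q, (s - c) * (q - s)) = (c - p)^3 / 6 := by
    have hcg : (∫ s in c..q, (s - c) * (q - s))
        = ∫ s in c..q, ((q - c) * (s - c) - (s - c)^2) := by
      apply intervalIntegral.integral_congr; intro s _; ring
    rw [hcg, intervalIntegral.integral_sub, intervalIntegral.integral_const_mul, e3', e3, hdd]
    · ring
    · apply Continuous.intervalIntegrable; fun_prop
    · apply Continuous.intervalIntegrable; fun_prop
  -- values of the bounding integrals
  have E1 : (∫ s in p..c, (M * (c - s)) * (((c - s) * A + (s - p) * (m * C)) / (c - p)))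
      = M / (c - p) * (A * ((c - p)^3/3) + (m * C) * ((c - p)^3/6)) := by
    have hfn : (fun s => (M * (c - s)) * (((c - s) * A + (s - p) * (m * C)) / (c - p)))
        = fun s => (M / (c - p) * A) * (c - s)^2 + (M / (c - p) * (m * C)) * ((c - s) * (s - p)) := by
      funext s; field_simp [hm0.ne', sub_ne_zero.mpr hpq.ne', hd0.ne', ne_of_gt (by linarith : (0:ℝ) < -p + q)]
    rw [hfn, intervalIntegral.integral_add, intervalIntegral.integral_const_mul,
        intervalIntegral.integral_const_mul, e1, e2]
    · ring
    · apply Continuous.intervalIntegrable; fun_prop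
    · apply Continuous.intervalIntegrable; fun_prop
  have E2 : (∫ s in c..q, (M * (s - c)) * (((s - c) * B + (q - s) * (m * C)) / (c - p)))
      = M / (c - p) * (B * ((c - p)^3/3) + (m * C) * ((c - p)^3/6)) := by
    have hfn : (fun s => (M * (s - c)) * (((s - c) * B + (q - s) * (m * C)) / (c - p)))
        = fun s => (M / (c - p) * B) * (s - c)^2 + (M / (c - p) * (m * C)) * ((s - c) * (q - s)) := by
      funext s; field_simp [hm0.ne', sub_ne_zero.mpr hpq.ne', hd0.ne', ne_of_gt (by linarith : (0:ℝ) < -p + q)]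
    rw [hfn, intervalIntegral.integral_add, intervalIntegral.integral_const_mul,
        intervalIntegral.integral_const_mul, e3, e4]
    · ring
    · apply Continuous.intervalIntegrable; fun_prop
    · apply Continuous.intervalIntegrable; fun_prop
  -- integrability of the integrand on halves
  have hKcont : Continuous (fun s => P q / 2 - P s) := continuous_const.sub hPcont
  have intGK1 : IntervalIntegrable (fun s => deriv G s * (P q / 2 - P s)) volume p c := by
    rw [intervalIntegrable_iff_integrableOn_Icc_of_le hpc.le]
    exact ((hG'cont.mono (Set.Icc_subset_Icc le_rfl hcq.le)).mul
      hKcont.continuousOn).integrableOn_compact isCompact_Icc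
  have intGK2 : IntervalIntegrable (fun s => deriv G s * (P q / 2 - P s)) volume c q := by
    rw [intervalIntegrable_iff_integrableOn_Icc_of_le hcq.le]
    exact ((hG'cont.mono (Set.Icc_subset_Icc hpc.le le_rfl)).mul
      hKcont.continuousOn).integrableOn_compact isCompact_Icc
  -- bounds on the two halves
  have hb1 : |∫ s in p..c, deriv G s * (P q / 2 - P s)|
      ≤ M / (c - p) * (A * ((c - p)^3/3) + (m * C) * ((c - p)^3/6)) := by
    rw [← E1]
    refine le_trans (intervalIntegral.abs_integral_le_integral_abs hpc.le) ?_
    apply intervalIntegral.integral_mono_on hpc.le intGK1.abs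
    · apply Continuous.intervalIntegrable; fun_prop
    · exact hPW1
  have hb2 : |∫ s in c..q, deriv G s * (P q / 2 - P s)|
      ≤ M / (c - p) * (B * ((c - p)^3/3) + (m * C) * ((c - p)^3/6)) := by
    rw [← E2]
    refine le_trans (intervalIntegral.abs_integral_le_integral_abs hcq.le) ?_
    apply intervalIntegral.integral_mono_on hcq.le intGK2.abs
    · apply Continuous.intervalIntegrable; fun_prop
    · exact hPW2
  -- assemble
  have hPqgoal : (∫ t in p..q, W t) = P q := rfl
  rw [hPqgoal, hE]
  have hsplit : (∫ s in p..q, deriv G s * (P q / 2 - P s))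
      = (∫ s in p..c, deriv G s * (P q / 2 - P s))
        + ∫ s in c..q, deriv G s * (P q / 2 - P s) :=
    (intervalIntegral.integral_add_adjacent_intervals intGK1 intGK2).symm
  rw [hsplit]
  calc |(∫ s in p..c, deriv G s * (P q / 2 - P s))
          + ∫ s in c..q, deriv G s * (P q / 2 - P s)|
      ≤ |∫ s in p..c, deriv G s * (P q / 2 - P s)|
          + |∫ s in c..q, deriv G s * (P q / 2 - P s)| := abs_add_le _ _
    _ ≤ M / (c - p) * (A * ((c - p)^3/3) + (m * C) * ((c - p)^3/6))
          + M / (c - p) * (B * ((c - p)^3/3) + (m * C) * ((c - p)^3/6)) := add_le_add hb1 hb2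
    _ = (q - p) ^ 2 / 4 * M * ((1/3) * (A + B) + (m / 3) * C) := by
        have hc2 : c - p = (q - p) / 2 := by rw [hc]; ring
        rw [hc2]
        field_simp [sub_ne_zero.mpr hpq.ne']
        ring


theorem quadrature_error_bound
    (ν μ m a b : ℝ) (hm : m ∈ Set.Ioc (0:ℝ) 1)
    (i : ℕ) (hi : 0 < i) (x : ℕ → ℝ)
    (hx0 : x 0 = ν) (hxi : x i = μ)
    (hxmono : ∀ j < i, x j < x (j + 1))
    (hab : Set.Icc ν μ ⊆ Set.Ioo a b)
    (hmid : ∀ j < i, (x j + x (j + 1)) / (2 * m) ∈ Set.Ioo a b)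
    (G W : ℝ → ℝ)
    (hG : ContDiffOn ℝ 1 G (Set.Ioo a b))
    (hG' : ∀ u ∈ Set.Ioo a b, ∀ v ∈ Set.Ioo a b, ∀ γ ∈ Set.Icc (0:ℝ) 1,
      |deriv G (γ * u + m * (1 - γ) * v)| ≤ γ * |deriv G u| + m * (1 - γ) * |deriv G v|)
    (hWnonneg : ∀ t ∈ Set.Icc ν μ, 0 ≤ W t)
    (hWcont : ContinuousOn W (Set.Icc ν μ))
    (hWsym : ∀ j < i, ∀ t ∈ Set.Icc (x j) (x (j + 1)), W (x j + x (j + 1) - t) = W t) :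
    |(∫ t in ν..μ, W t * G t)
        - ∑ j ∈ Finset.range i,
            (G (x j) + G (x (j + 1))) / 2 * ∫ t in (x j)..(x (j + 1)), W t|
      ≤ ∑ j ∈ Finset.range i,
          (x (j + 1) - x j) ^ 2 / 4 * sSup (W '' Set.Icc ν μ) *
            ((1/3) * (|deriv G (x j)| + |deriv G (x (j + 1))|)
              + (m / 3) * |deriv G ((x (j + 1) + x j) / (2 * m))|) := by
  obtain ⟨hm0, _hm1⟩ := hm
  have key : ∀ n, ∀ j ≤ n, n ≤ i → x j ≤ x n := by
    intro n
    induction n with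
    | zero => intro j hj _; simp [Nat.le_zero.mp hj]
    | succ n ih =>
      intro j hj hni
      rcases eq_or_lt_of_le hj with rfl | h
      · exact le_refl _
      · exact (ih j (Nat.lt_succ_iff.mp h) ((Nat.le_succ n).trans hni)).trans
          (hxmono n (Nat.lt_of_lt_of_le (Nat.lt_succ_self n) hni)).le
  have hsubIcc : ∀ j < i, Set.Icc (x j) (x (j + 1)) ⊆ Set.Icc ν μ := by
    intro j hj
    apply Set.Icc_subset_Icc
    · rw [← hx0]; exact key j 0 (Nat.zero_le j) hj.le
    · rw [← hxi]; exact key i (j + 1) hj (le_refl i)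
  set M := sSup (W '' Set.Icc ν μ) with hMdef
  have hMle : ∀ t ∈ Set.Icc ν μ, W t ≤ M := by
    intro t ht
    exact le_csSup ((isCompact_Icc.image_of_continuousOn hWcont).bddAbove)
      (Set.mem_image_of_mem W ht)
  have hint : ∀ j < i, IntervalIntegrable (fun t => W t * G t) volume (x j) (x (j + 1)) := by
    intro j hj
    apply ContinuousOn.intervalIntegrable
    rw [Set.uIcc_of_le (hxmono j hj).le]
    exact (hWcont.mono (hsubIcc j hj)).mul (hG.continuousOn.mono ((hsubIcc j hj).trans hab))
  have hsum : (∫ t in ν..μ, W t * G t)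
      = ∑ j ∈ Finset.range i, ∫ t in (x j)..(x (j + 1)), W t * G t := by
    rw [intervalIntegral.sum_integral_adjacent_intervals hint, hx0, hxi]
  have hdiff : (∫ t in ν..μ, W t * G t)
      - ∑ j ∈ Finset.range i, (G (x j) + G (x (j + 1))) / 2 * ∫ t in (x j)..(x (j + 1)), W t
      = ∑ j ∈ Finset.range i, ((∫ t in (x j)..(x (j + 1)), W t * G t)
          - (G (x j) + G (x (j + 1))) / 2 * ∫ t in (x j)..(x (j + 1)), W t) := by
    rw [Finset.sum_sub_distrib, ← hsum]
  rw [hdiff]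
  refine le_trans (Finset.abs_sum_le_sum_abs _ _) (Finset.sum_le_sum ?_)
  intro j hj
  rw [Finset.mem_range] at hj
  set p := x j with hpdef
  set q := x (j + 1) with hqdef
  have hpq : p < q := hxmono j hj
  have hIcc : Set.Icc p q ⊆ Set.Icc ν μ := hsubIcc j hj
  set Wc : ℝ → ℝ := fun t => W (max p (min t q)) with hWcdef
  have hclamp : ∀ t, max p (min t q) ∈ Set.Icc p q := by
    intro t
    exact ⟨le_max_left _ _, max_le hpq.le (min_le_right _ _)⟩
  have hWcCont : Continuous Wc := by
    apply hWcont.comp_continuous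
    · exact continuous_const.max (continuous_id.min continuous_const)
    · intro t; exact hIcc (hclamp t)
  have hWceq : ∀ t ∈ Set.Icc p q, Wc t = W t := by
    intro t ht
    have h : max p (min t q) = t := by
      rw [min_eq_left ht.2, max_eq_right ht.1]
    rw [hWcdef]; simp only []; rw [h]
  have hWcG : (∫ t in p..q, Wc t * G t) = ∫ t in p..q, W t * G t := by
    apply intervalIntegral.integral_congr
    intro t ht
    rw [Set.uIcc_of_le hpq.le] at ht
    show Wc t * G t = W t * G t
    rw [hWceq t ht]
  have hWcI : (∫ t in p..q, Wc t) = ∫ t in p..q, W t := by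
    apply intervalIntegral.integral_congr
    intro t ht
    rw [Set.uIcc_of_le hpq.le] at ht
    show Wc t = W t
    exact hWceq t ht
  rw [← hWcG, ← hWcI]
  refine sub_bound a b m hm0 p q hpq (hIcc.trans hab) (hmid j hj) G Wc hG hG' hWcCont
    ?_ M ?_ ?_
  · intro t ht
    have ht' : p + q - t ∈ Set.Icc p q := ⟨by linarith [ht.2], by linarith [ht.1]⟩
    rw [hWceq _ ht', hWceq t ht]
    exact hWsym j hj t ht
  · intro t ht
    rw [hWceq t ht]
    exact hMle t (hIcc ht)
  · intro t ht
    rw [hWceq t ht]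
    exact hWnonneg t (hIcc ht)
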